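/- arXiv:1009.0454 — 4 statements merged into one kernel-verified Lean document; each statement's English description precedes it below -/
import Mathlib

section
/- Let n be a natural number. For any two surjective group homomorphisms φ, ψ : F_n →* ℤ × ℤ there exists an automorphism α of F_n with ψ ∘ α = φ. (This is the case of the main theorem for the torus, whose fundamental group is ℤ × ℤ.) -/
namespace AutTransTorus

open FreeGroup Function

variable {n : ℕ} {M : Type*} [CommGroup M]

def invHom (i : Fin n) : FreeGroup (Fin n) →* FreeGroup (Fin n) :=
  FreeGroup.lift (fun j => if j = i then (FreeGroup.of i)⁻¹ else FreeGroup.of j)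

lemma invHom_comp (i : Fin n) : (invHom i).comp (invHom i) = MonoidHom.id _ :=
  FreeGroup.ext_hom _ _ fun a => by
    by_cases h : a = i <;> simp [invHom, h]

def invAut (i : Fin n) : FreeGroup (Fin n) ≃* FreeGroup (Fin n) :=
  MonoidHom.toMulEquiv (invHom i) (invHom i) (invHom_comp i) (invHom_comp i)

def mulHomF (i j : Fin n) : FreeGroup (Fin n) →* FreeGroup (Fin n) :=
  FreeGroup.lift (fun k => if k = i then FreeGroup.of i * FreeGroup.of j else FreeGroup.of k)

def mulHomB (i j : Fin n) : FreeGroup (Fin n) →* FreeGroup (Fin n) :=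
  FreeGroup.lift (fun k => if k = i then FreeGroup.of i * (FreeGroup.of j)⁻¹ else FreeGroup.of k)

lemma mulHom_comp₁ (i j : Fin n) (hij : i ≠ j) :
    (mulHomB i j).comp (mulHomF i j) = MonoidHom.id _ :=
  FreeGroup.ext_hom _ _ fun a => by
    by_cases h : a = i <;> simp [mulHomF, mulHomB, h, (hij.symm : j ≠ i)]

lemma mulHom_comp₂ (i j : Fin n) (hij : i ≠ j) :
    (mulHomF i j).comp (mulHomB i j) = MonoidHom.id _ :=
  FreeGroup.ext_hom _ _ fun a => by
    by_cases h : a = i <;> simp [mulHomF, mulHomB, h, (hij.symm : j ≠ i)]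

def mulAut' (i j : Fin n) (hij : i ≠ j) : FreeGroup (Fin n) ≃* FreeGroup (Fin n) :=
  MonoidHom.toMulEquiv (mulHomF i j) (mulHomB i j) (mulHom_comp₁ i j hij) (mulHom_comp₂ i j hij)

inductive Reach (S : Finset (Fin n)) : (Fin n → M) → (Fin n → M) → Prop
  | refl (v) : Reach S v v
  | trans {u v w} : Reach S u v → Reach S v w → Reach S u w
  | swap (v) {i j : Fin n} (hi : i ∈ S) (hj : j ∈ S) : Reach S v (v ∘ Equiv.swap i j)
  | inv (v) {i : Fin n} (hi : i ∈ S) : Reach S v (Function.update v i (v i)⁻¹)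
  | mul (v) {i j : Fin n} (hi : i ∈ S) (hj : j ∈ S) (hij : i ≠ j) :
      Reach S v (Function.update v i (v i * v j))

namespace Reach

lemma cast {S : Finset (Fin n)} {v w w' : Fin n → M} (h : Reach S v w) (hw : w = w') :
    Reach S v w' := hw ▸ h

lemma mulinv (S : Finset (Fin n)) (v : Fin n → M) {i j : Fin n} (hi : i ∈ S) (hj : j ∈ S)
    (hij : i ≠ j) : Reach S v (Function.update v i (v i * (v j)⁻¹)) := by
  have h1 := Reach.inv (S := S) v hj
  set v1 := Function.update v j (v j)⁻¹ with hv1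
  have h2 := Reach.mul (S := S) v1 hi hj hij
  set v2 := Function.update v1 i (v1 i * v1 j) with hv2
  have h3 := Reach.inv (S := S) v2 hj
  refine ((h1.trans h2).trans h3).cast ?_
  funext k
  by_cases hk : k = j
  · subst hk
    simp [hv2, hv1, Function.update_of_ne hij.symm, Function.update_of_ne hij]
  · by_cases hk' : k = i
    · subst hk'
      simp [hv2, hv1, Function.update_of_ne hij, Function.update_of_ne (hk : k ≠ j)]
    · simp [hv2, hv1, Function.update_of_ne hk, Function.update_of_ne hk']

lemma symm {S : Finset (Fin n)} {v w : Fin n → M} (h : Reach S v w) : Reach S w v := by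
  induction h with
  | refl v => exact Reach.refl v
  | trans h1 h2 ih1 ih2 => exact ih2.trans ih1
  | @swap v i j hi hj =>
      refine (Reach.swap _ hi hj).cast ?_
      funext k; simp
  | @inv v i hi =>
      refine (Reach.inv _ (i := i) hi).cast ?_
      funext k
      by_cases hk : k = i
      · subst hk; simp
      · simp [Function.update_of_ne hk]
  | @mul v i j hi hj hij =>
      refine (Reach.mulinv _ _ hi hj hij).cast ?_
      funext k
      by_cases hk : k = i
      · subst hk; simp [Function.update_of_ne hij.symm]
      · simp [Function.update_of_ne hk]

lemma mono {S T : Finset (Fin n)} (hST : S ⊆ T) {v w : Fin n → M} (h : Reach S v w) :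
    Reach T v w := by
  induction h with
  | refl v => exact Reach.refl v
  | trans h1 h2 ih1 ih2 => exact ih1.trans ih2
  | swap v hi hj => exact Reach.swap v (hST hi) (hST hj)
  | inv v hi => exact Reach.inv v (hST hi)
  | mul v hi hj hij => exact Reach.mul v (hST hi) (hST hj) hij

lemma eq_of_not_mem {S : Finset (Fin n)} {v w : Fin n → M} (h : Reach S v w) {k : Fin n}
    (hk : k ∉ S) : w k = v k := by
  induction h with
  | refl v => rfl
  | trans h1 h2 ih1 ih2 => rw [ih2, ih1]
  | @swap v i j hi hj =>
      have h1 : k ≠ i := fun h => hk (h ▸ hi)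
      have h2 : k ≠ j := fun h => hk (h ▸ hj)
      simp [Equiv.swap_apply_of_ne_of_ne h1 h2]
  | @inv v i hi =>
      have h1 : k ≠ i := fun h => hk (h ▸ hi)
      exact Function.update_of_ne h1 _ _
  | @mul v i j hi hj hij =>
      have h1 : k ≠ i := fun h => hk (h ▸ hi)
      exact Function.update_of_ne h1 _ _

lemma preserve {N : Type*} [CommGroup N] (f : M →* N) {S : Finset (Fin n)} {v w : Fin n → M}
    (h : Reach S v w) (hv : ∀ i ∈ S, f (v i) = 1) : ∀ i ∈ S, f (w i) = 1 := by
  induction h with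
  | refl v => exact hv
  | trans h1 h2 ih1 ih2 => exact ih2 (ih1 hv)
  | @swap v i j hi hj =>
      intro k hk
      by_cases h1 : k = i
      · subst h1; simpa using hv _ hj
      · by_cases h2 : k = j
        · subst h2; simpa [Equiv.swap_apply_right] using hv _ hi
        · simpa [Equiv.swap_apply_of_ne_of_ne h1 h2] using hv _ hk
  | @inv v i hi =>
      intro k hk
      by_cases h1 : k = i
      · subst h1; simp [hv _ hi]
      · rw [Function.update_of_ne h1]; exact hv _ hk
  | @mul v i j hi hj hij =>
      intro k hk
      by_cases h1 : k = i
      · subst h1; simp [hv _ hi, hv _ hj]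
      · rw [Function.update_of_ne h1]; exact hv _ hk

end Reach


namespace Reach

lemma mul_zpow (S : Finset (Fin n)) (v : Fin n → M) {i j : Fin n} (hi : i ∈ S) (hj : j ∈ S)
    (hij : i ≠ j) (m : ℤ) : Reach S v (Function.update v i (v i * (v j) ^ m)) := by
  induction m using Int.induction_on with
  | zero => refine (Reach.refl v).cast ?_; simp [Function.update_eq_self]
  | succ k ih =>
      refine (ih.trans (Reach.mul _ hi hj hij)).cast ?_
      rw [Function.update_idem, Function.update_self, Function.update_of_ne hij.symm]
      rw [mul_assoc, ← zpow_add_one]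
  | pred k ih =>
      refine (ih.trans (Reach.mulinv _ _ hi hj hij)).cast ?_
      rw [Function.update_idem, Function.update_self, Function.update_of_ne hij.symm]
      rw [mul_assoc, ← zpow_sub_one]

lemma realize {S : Finset (Fin n)} {v w : Fin n → M} (h : Reach S v w) :
    ∃ α : FreeGroup (Fin n) ≃* FreeGroup (Fin n),
      (FreeGroup.lift v).comp α.toMonoidHom = FreeGroup.lift w := by
  induction h with
  | refl v => exact ⟨MulEquiv.refl _, FreeGroup.ext_hom _ _ fun a => by simp⟩
  | trans h1 h2 ih1 ih2 =>
      obtain ⟨α₁, hα₁⟩ := ih1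
      obtain ⟨α₂, hα₂⟩ := ih2
      refine ⟨α₂.trans α₁, FreeGroup.ext_hom _ _ fun a => ?_⟩
      have e1 := DFunLike.congr_fun hα₁ (α₂ (FreeGroup.of a))
      have e2 := DFunLike.congr_fun hα₂ (FreeGroup.of a)
      simpa using e1.trans e2
  | @swap v i j hi hj =>
      refine ⟨freeGroupCongr (Equiv.swap i j), FreeGroup.ext_hom _ _ fun a => by simp⟩
  | @inv v i hi =>
      refine ⟨invAut i, FreeGroup.ext_hom _ _ fun a => ?_⟩
      by_cases h : a = i
      · subst h; simp [invAut, invHom, MonoidHom.toMulEquiv]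
      · simp [invAut, invHom, MonoidHom.toMulEquiv, h, Function.update_of_ne h]
  | @mul v i j hi hj hij =>
      refine ⟨mulAut' i j hij, FreeGroup.ext_hom _ _ fun a => ?_⟩
      by_cases h : a = i
      · subst h; simp [mulAut', mulHomF, MonoidHom.toMulEquiv]
      · simp [mulAut', mulHomF, MonoidHom.toMulEquiv, h, Function.update_of_ne h]

end Reach

def msr (S : Finset (Fin n)) (f : M →* Multiplicative ℤ) (v : Fin n → M) : ℕ :=
  ∑ i ∈ S, ((f (v i)).toAdd).natAbs

lemma msr_update (S : Finset (Fin n)) (f : M →* Multiplicative ℤ) (v : Fin n → M)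
    {i : Fin n} (hi : i ∈ S) (x : M) :
    msr S f (Function.update v i x) = ((f x).toAdd).natAbs + ∑ k ∈ S \ {i}, ((f (v k)).toAdd).natAbs := by
  unfold msr
  rw [show (fun k => ((f (Function.update v i x k)).toAdd).natAbs)
      = Function.update (fun k => ((f (v k)).toAdd).natAbs) i ((f x).toAdd).natAbs from ?_]
  · exact Finset.sum_update_of_mem hi _ _
  · funext k
    by_cases hk : k = i
    · subst hk; simp
    · simp [Function.update_of_ne hk]

lemma msr_split (S : Finset (Fin n)) (f : M →* Multiplicative ℤ) (v : Fin n → M)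
    {i : Fin n} (hi : i ∈ S) :
    msr S f v = ((f (v i)).toAdd).natAbs + ∑ k ∈ S \ {i}, ((f (v k)).toAdd).natAbs := by
  unfold msr
  rw [← Finset.sum_update_of_mem hi]
  congr 1
  funext k
  by_cases hk : k = i
  · subst hk; simp
  · simp [Function.update_of_ne hk]

lemma step (S : Finset (Fin n)) (f : M →* Multiplicative ℤ) (v : Fin n → M) {i j : Fin n}
    (hi : i ∈ S) (hj : j ∈ S) (hij : i ≠ j) (hbj : (f (v j)).toAdd ≠ 0)
    (hba : ((f (v j)).toAdd).natAbs ≤ ((f (v i)).toAdd).natAbs) :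
    ∃ w, Reach S v w ∧ msr S f w < msr S f v := by
  set a := (f (v i)).toAdd with ha
  set b := (f (v j)).toAdd with hb
  by_cases hc : (a + b).natAbs < a.natAbs
  · refine ⟨Function.update v i (v i * v j), Reach.mul v hi hj hij, ?_⟩
    rw [msr_update S f v hi, msr_split S f v hi]
    have : (f (v i * v j)).toAdd = a + b := by rw [_root_.map_mul]; rfl
    rw [this]
    omega
  · have hc' : (a - b).natAbs < a.natAbs := by omega
    refine ⟨Function.update v i (v i * (v j)⁻¹), Reach.mulinv S v hi hj hij, ?_⟩
    rw [msr_update S f v hi, msr_split S f v hi]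
    have : (f (v i * (v j)⁻¹)).toAdd = a - b := by
      rw [_root_.map_mul, _root_.map_inv]
      show a + (-b) = a - b
      ring
    rw [this]
    omega

lemma euclid_aux (S : Finset (Fin n)) (f : M →* Multiplicative ℤ) :
    ∀ (N : ℕ) (v : Fin n → M), msr S f v ≤ N →
    ∃ w, Reach S v w ∧
      ∀ i ∈ S, ∀ j ∈ S, i ≠ j → (f (w i)).toAdd = 0 ∨ (f (w j)).toAdd = 0 := by
  intro N
  induction N with
  | zero =>
      intro v hv
      refine ⟨v, Reach.refl v, fun i hi j hj hij => ?_⟩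
      left
      have := Finset.sum_eq_zero_iff.mp (Nat.le_zero.mp hv) i hi
      omega
  | succ N ih =>
      intro v hv
      by_cases hp : ∃ i ∈ S, ∃ j ∈ S, i ≠ j ∧ (f (v i)).toAdd ≠ 0 ∧ (f (v j)).toAdd ≠ 0
      · obtain ⟨i, hi, j, hj, hij, hai, haj⟩ := hp
        rcases le_total ((f (v j)).toAdd).natAbs ((f (v i)).toAdd).natAbs with hle | hle
        · obtain ⟨w', hw', hm⟩ := step S f v hi hj hij haj hle
          obtain ⟨w, hww, hfin⟩ := ih w' (by omega)
          exact ⟨w, hw'.trans hww, hfin⟩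
        · obtain ⟨w', hw', hm⟩ := step S f v hj hi hij.symm hai hle
          obtain ⟨w, hww, hfin⟩ := ih w' (by omega)
          exact ⟨w, hw'.trans hww, hfin⟩
      · push_neg at hp
        refine ⟨v, Reach.refl v, fun i hi j hj hij => ?_⟩
        by_cases h1 : (f (v i)).toAdd = 0
        · exact Or.inl h1
        · exact Or.inr (hp i hi j hj hij h1)

lemma euclid (S : Finset (Fin n)) (f : M →* Multiplicative ℤ) {i₀ : Fin n} (h₀ : i₀ ∈ S)
    (v : Fin n → M) :
    ∃ w, Reach S v w ∧ ∀ i ∈ S, i ≠ i₀ → (f (w i)).toAdd = 0 := by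
  obtain ⟨w, hvw, hpair⟩ := euclid_aux S f (msr S f v) v le_rfl
  by_cases h : ∃ i ∈ S, i ≠ i₀ ∧ (f (w i)).toAdd ≠ 0
  · obtain ⟨i, hi, hii, hnz⟩ := h
    refine ⟨w ∘ Equiv.swap i i₀, hvw.trans (Reach.swap w hi h₀), fun k hk hk0 => ?_⟩
    by_cases h1 : k = i
    · subst h1
      simp only [Function.comp_apply, Equiv.swap_apply_left]
      rcases hpair k hk i₀ h₀ hii with h2 | h2
      · exact absurd h2 hnz
      · exact h2
    · simp only [Function.comp_apply, Equiv.swap_apply_of_ne_of_ne h1 hk0]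
      rcases hpair k hk i hi (fun he => h1 he) with h2 | h2
      · exact h2
      · exact absurd h2 hnz
  · push_neg at h
    refine ⟨w, hvw, fun i hi hii => ?_⟩
    by_contra hne
    exact hne (h i hi hii)

def f1 : Multiplicative (ℤ × ℤ) →* Multiplicative ℤ where
  toFun x := Multiplicative.ofAdd x.toAdd.1
  map_one' := rfl
  map_mul' _ _ := rfl

def f2 : Multiplicative (ℤ × ℤ) →* Multiplicative ℤ where
  toFun x := Multiplicative.ofAdd x.toAdd.2
  map_one' := rfl
  map_mul' _ _ := rfl

@[simp] lemma f1_toAdd (x : Multiplicative (ℤ × ℤ)) : (f1 x).toAdd = x.toAdd.1 := rfl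
@[simp] lemma f2_toAdd (x : Multiplicative (ℤ × ℤ)) : (f2 x).toAdd = x.toAdd.2 := rfl

def std (n : ℕ) : Fin n → Multiplicative (ℤ × ℤ) := fun i =>
  if (i : ℕ) = 0 then Multiplicative.ofAdd ((1 : ℤ), (0 : ℤ))
  else if (i : ℕ) = 1 then Multiplicative.ofAdd ((0 : ℤ), (1 : ℤ)) else 1

lemma closure_top_of_surj {v : Fin n → Multiplicative (ℤ × ℤ)}
    (hv : Function.Surjective (FreeGroup.lift v)) :
    Subgroup.closure (Set.range v) = ⊤ := by
  rw [← FreeGroup.range_lift_eq_closure]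
  exact MonoidHom.range_eq_top_of_surjective _ hv

lemma two_le {v : Fin n → Multiplicative (ℤ × ℤ)}
    (hv : Function.Surjective (FreeGroup.lift v)) : 2 ≤ n := by
  by_contra h
  push_neg at h
  have htop := closure_top_of_surj hv
  interval_cases n
  · rw [Set.range_eq_empty v, Subgroup.closure_empty] at htop
    have h1 : Multiplicative.ofAdd ((1 : ℤ), (0 : ℤ)) ∈ (⊥ : Subgroup (Multiplicative (ℤ × ℤ))) :=
      htop ▸ Subgroup.mem_top _
    rw [Subgroup.mem_bot] at h1
    have := congrArg (fun x : Multiplicative (ℤ × ℤ) => x.toAdd.1) h1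
    simp at this
  · rw [Set.range_unique] at htop
    have h1 : Multiplicative.ofAdd ((1 : ℤ), (0 : ℤ)) ∈ Subgroup.closure {v default} :=
      htop ▸ Subgroup.mem_top _
    have h2 : Multiplicative.ofAdd ((0 : ℤ), (1 : ℤ)) ∈ Subgroup.closure {v default} :=
      htop ▸ Subgroup.mem_top _
    rw [Subgroup.mem_closure_singleton] at h1 h2
    obtain ⟨k, hk⟩ := h1
    obtain ⟨l, hl⟩ := h2
    have hk1 := congrArg (fun x : Multiplicative (ℤ × ℤ) => x.toAdd.1) hk
    have hk2 := congrArg (fun x : Multiplicative (ℤ × ℤ) => x.toAdd.2) hk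
    have hl2 := congrArg (fun x : Multiplicative (ℤ × ℤ) => x.toAdd.2) hl
    simp [Prod.smul_def] at hk1 hk2 hl2
    have hk0 : k ≠ 0 := by rintro rfl; simp at hk1
    have h20 : (Multiplicative.toAdd (v 0)).2 = 0 := hk2.resolve_left hk0
    rw [h20, mul_zero] at hl2
    exact absurd hl2 zero_ne_one

lemma reach_std (h2 : 2 ≤ n) (v : Fin n → Multiplicative (ℤ × ℤ))
    (hv : Function.Surjective (FreeGroup.lift v)) : Reach Finset.univ v (std n) := by
  have h0n : 0 < n := by omega
  have h1n : 1 < n := by omega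
  set i0 : Fin n := ⟨0, h0n⟩ with hi0
  set i1 : Fin n := ⟨1, h1n⟩ with hi1
  have hne : i0 ≠ i1 := by simp [hi0, hi1, Fin.ext_iff]
  -- Stage 1: clear first coordinates away from i0
  obtain ⟨w1, R1, H1⟩ := euclid Finset.univ f1 (Finset.mem_univ i0) v
  -- Stage 2: clear second coordinates away from i0, i1
  have hmem1 : i1 ∈ Finset.univ.erase i0 := Finset.mem_erase.mpr ⟨hne.symm, Finset.mem_univ _⟩
  obtain ⟨w2, R2', H2⟩ := euclid (Finset.univ.erase i0) f2 hmem1 w1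
  have R2 : Reach Finset.univ w1 w2 := R2'.mono (Finset.subset_univ _)
  have h2fst : ∀ i : Fin n, i ≠ i0 → ((w2 i).toAdd).1 = 0 := by
    have hw1 : ∀ k ∈ Finset.univ.erase i0, f1 (w1 k) = 1 := fun k hk =>
      toAdd_eq_zero.mp (H1 k (Finset.mem_univ k) (Finset.mem_erase.mp hk).1)
    intro i hi
    have hiS : i ∈ Finset.univ.erase i0 := Finset.mem_erase.mpr ⟨hi, Finset.mem_univ _⟩
    have := R2'.preserve f1 hw1 i hiS
    have := congrArg Multiplicative.toAdd this
    simpa using this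
  have h2snd : ∀ i : Fin n, i ≠ i0 → i ≠ i1 → ((w2 i).toAdd).2 = 0 := fun i hI0 hI1 =>
    H2 i (Finset.mem_erase.mpr ⟨hI0, Finset.mem_univ _⟩) hI1
  have h2one : ∀ i : Fin n, i ≠ i0 → i ≠ i1 → w2 i = 1 := by
    intro i hI0 hI1
    have : (w2 i).toAdd = 0 := Prod.ext (h2fst i hI0) (h2snd i hI0 hI1)
    exact toAdd_eq_zero.mp this
  -- surjectivity transfer
  have hsurj : ∀ {w : Fin n → Multiplicative (ℤ × ℤ)}, Reach Finset.univ v w →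
      Function.Surjective (FreeGroup.lift w) := by
    intro w hR
    obtain ⟨α, hα⟩ := hR.realize
    rw [← hα, MonoidHom.coe_comp]
    refine hv.comp ?_
    rw [MulEquiv.coe_toMonoidHom]
    exact α.surjective
  -- first invariant: a := (w2 i0).toAdd.1 is ±1
  have htop2 := closure_top_of_surj (hsurj (R1.trans R2))
  have hdvd : ∀ x ∈ Subgroup.closure (Set.range w2), (w2 i0).toAdd.1 ∣ x.toAdd.1 := by
    intro x hx
    refine Subgroup.closure_induction ?_ ?_ ?_ ?_ hx
    · rintro x ⟨i, rfl⟩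
      by_cases hI : i = i0
      · subst hI; exact dvd_refl _
      · rw [h2fst i hI]; exact dvd_zero _
    · simp
    · intro x y _ _ hx hy
      rw [toAdd_mul, Prod.fst_add]
      exact dvd_add hx hy
    · intro x _ hx
      rw [toAdd_inv, Prod.fst_neg]
      exact dvd_neg.mpr hx
  have ha : (w2 i0).toAdd.1 = 1 ∨ (w2 i0).toAdd.1 = -1 := by
    have h1 : Multiplicative.ofAdd ((1 : ℤ), (0 : ℤ)) ∈ Subgroup.closure (Set.range w2) :=
      htop2 ▸ Subgroup.mem_top _
    have := hdvd _ h1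
    simp only [toAdd_ofAdd] at this
    exact Int.isUnit_iff.mp (isUnit_of_dvd_one this)
  -- fix sign at i0
  obtain ⟨w3, R3, h3a, h3rest⟩ :
      ∃ w3, Reach Finset.univ w2 w3 ∧ (w3 i0).toAdd.1 = 1 ∧ ∀ i, i ≠ i0 → w3 i = w2 i := by
    rcases ha with h | h
    · exact ⟨w2, Reach.refl _, h, fun _ _ => rfl⟩
    · refine ⟨Function.update w2 i0 (w2 i0)⁻¹, Reach.inv w2 (Finset.mem_univ i0), ?_,
        fun i hi => Function.update_of_ne hi _ _⟩
      rw [Function.update_self, toAdd_inv, Prod.fst_neg, h]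
      norm_num
  have h3fst : ∀ i : Fin n, i ≠ i0 → ((w3 i).toAdd).1 = 0 := fun i hi => by
    rw [h3rest i hi]; exact h2fst i hi
  have h3one : ∀ i : Fin n, i ≠ i0 → i ≠ i1 → w3 i = 1 := fun i hI0 hI1 => by
    rw [h3rest i hI0]; exact h2one i hI0 hI1
  -- second invariant: c := (w3 i1).toAdd.2 is ±1
  set b := (w3 i0).toAdd.2 with hbdef
  have htop3 := closure_top_of_surj (hsurj ((R1.trans R2).trans R3))
  have hdvd2 : ∀ x ∈ Subgroup.closure (Set.range w3),
      (w3 i1).toAdd.2 ∣ (x.toAdd.2 - x.toAdd.1 * b) := by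
    intro x hx
    refine Subgroup.closure_induction ?_ ?_ ?_ ?_ hx
    · rintro x ⟨i, rfl⟩
      by_cases hI : i = i0
      · subst hI
        rw [h3a]
        simp [hbdef]
      · by_cases hI1 : i = i1
        · subst hI1
          rw [h3fst i1 hne.symm]
          simp
        · rw [h3one i hI hI1]
          simp
    · simp
    · intro x y _ _ hx hy
      rw [toAdd_mul, Prod.fst_add, Prod.snd_add]
      have : x.toAdd.2 + y.toAdd.2 - (x.toAdd.1 + y.toAdd.1) * b
          = (x.toAdd.2 - x.toAdd.1 * b) + (y.toAdd.2 - y.toAdd.1 * b) := by ring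
      rw [this]
      exact dvd_add hx hy
    · intro x _ hx
      rw [toAdd_inv, Prod.fst_neg, Prod.snd_neg]
      have : -x.toAdd.2 - -x.toAdd.1 * b = -(x.toAdd.2 - x.toAdd.1 * b) := by ring
      rw [this]
      exact dvd_neg.mpr hx
  have hc : (w3 i1).toAdd.2 = 1 ∨ (w3 i1).toAdd.2 = -1 := by
    have h1 : Multiplicative.ofAdd ((0 : ℤ), (1 : ℤ)) ∈ Subgroup.closure (Set.range w3) :=
      htop3 ▸ Subgroup.mem_top _
    have := hdvd2 _ h1
    simp only [toAdd_ofAdd] at this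
    norm_num at this
    exact Int.isUnit_iff.mp (isUnit_of_dvd_one this)
  -- fix sign at i1
  obtain ⟨w4, R4, h4i1, h4rest⟩ :
      ∃ w4, Reach Finset.univ w3 w4 ∧ (w4 i1).toAdd = ((0 : ℤ), (1 : ℤ)) ∧
        ∀ i, i ≠ i1 → w4 i = w3 i := by
    rcases hc with h | h
    · exact ⟨w3, Reach.refl _, Prod.ext (h3fst i1 hne.symm) h, fun _ _ => rfl⟩
    · refine ⟨Function.update w3 i1 (w3 i1)⁻¹, Reach.inv w3 (Finset.mem_univ i1), ?_,
        fun i hi => Function.update_of_ne hi _ _⟩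
      rw [Function.update_self, toAdd_inv]
      refine Prod.ext ?_ ?_
      · rw [Prod.fst_neg, h3fst i1 hne.symm]; norm_num
      · rw [Prod.snd_neg, h]; norm_num
  have h4i0 : (w4 i0).toAdd = ((1 : ℤ), b) := by
    rw [h4rest i0 hne]
    exact Prod.ext h3a rfl
  have h4one : ∀ i : Fin n, i ≠ i0 → i ≠ i1 → w4 i = 1 := fun i hI0 hI1 => by
    rw [h4rest i hI1]; exact h3one i hI0 hI1
  -- final move: clear b
  have R5 := Reach.mul_zpow Finset.univ w4 (Finset.mem_univ i0) (Finset.mem_univ i1) hne (-b)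
  have hfinal : Function.update w4 i0 (w4 i0 * (w4 i1) ^ (-b)) = std n := by
    funext i
    by_cases hI0 : i = i0
    · subst hI0
      rw [Function.update_self]
      have : (w4 i0 * (w4 i1) ^ (-b)).toAdd = ((1 : ℤ), (0 : ℤ)) := by
        rw [toAdd_mul, toAdd_zpow, h4i0, h4i1]
        refine Prod.ext ?_ ?_
        · simp [Prod.smul_def]
        · simp [Prod.smul_def]
      have := congrArg Multiplicative.ofAdd this
      rw [ofAdd_toAdd] at this
      rw [this]
      simp [std, hi0]
    · rw [Function.update_of_ne hI0]
      by_cases hI1 : i = i1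
      · subst hI1
        have := congrArg Multiplicative.ofAdd h4i1
        rw [ofAdd_toAdd] at this
        rw [this]
        have : (i1 : ℕ) ≠ 0 := by simp [hi1]
        simp [std, hi1]
      · rw [h4one i hI0 hI1]
        have hv0 : (i : ℕ) ≠ 0 := fun h => hI0 (Fin.ext (by simp [h, hi0]))
        have hv1 : (i : ℕ) ≠ 1 := fun h => hI1 (Fin.ext (by simp [h, hi1]))
        simp [std, hv0, hv1]
  exact (((R1.trans R2).trans R3).trans R4).trans (R5.cast hfinal)

end AutTransTorus

theorem aut_transitive_on_epis_torus_group (n : ℕ)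
    (φ ψ : FreeGroup (Fin n) →* Multiplicative (ℤ × ℤ))
    (hφ : Function.Surjective φ) (hψ : Function.Surjective ψ) :
    ∃ α : FreeGroup (Fin n) ≃* FreeGroup (Fin n),
      ψ.comp α.toMonoidHom = φ := by
  classical
  have hφ' : FreeGroup.lift (φ ∘ FreeGroup.of) = φ :=
    FreeGroup.ext_hom _ _ fun a => by simp
  have hψ' : FreeGroup.lift (ψ ∘ FreeGroup.of) = ψ :=
    FreeGroup.ext_hom _ _ fun a => by simp
  have hφs : Function.Surjective (FreeGroup.lift (φ ∘ FreeGroup.of)) := by rw [hφ']; exact hφ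
  have hψs : Function.Surjective (FreeGroup.lift (ψ ∘ FreeGroup.of)) := by rw [hψ']; exact hψ
  have h2 : 2 ≤ n := AutTransTorus.two_le hφs
  have Ru := AutTransTorus.reach_std h2 _ hφs
  have Rw := AutTransTorus.reach_std h2 _ hψs
  obtain ⟨β₂, hβ₂⟩ := Rw.realize
  obtain ⟨β₁, hβ₁⟩ := Ru.symm.realize
  refine ⟨β₁.trans β₂, ?_⟩
  ext1 x
  have e1 := DFunLike.congr_fun hβ₂ (β₁ (FreeGroup.of x))
  have e2 := DFunLike.congr_fun hβ₁ (FreeGroup.of x)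
  simp only [MonoidHom.coe_comp, Function.comp_apply, MulEquiv.coe_toMonoidHom] at e1 e2 ⊢
  rw [← hψ', ← hφ']
  simp only [MulEquiv.trans_apply]
  rw [e1, e2]
end

section
/- Let n be a natural number and let K be the Klein bottle group, the presented group on two generators x_0, x_1 with single relator x_0² x_1². For any two surjective group homomorphisms φ, ψ : F_n →* K there exists an automorphism α of F_n with ψ ∘ α = φ. -/
/-- The single relator `x_0² x_1² ⋯ x_{k-1}²` of the nonorientable genus-`k`
surface group, as an element of the free group on `Fin k`. -/
def nonorientableRelator (k : ℕ) : FreeGroup (Fin k) :=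
  ((List.finRange k).map (fun i => (FreeGroup.of i) ^ 2)).prod

/-- The nonorientable genus-`k` surface group. -/
def NonorientableSurfaceGroup (k : ℕ) : Type :=
  PresentedGroup ({nonorientableRelator k} : Set (FreeGroup (Fin k)))

instance (k : ℕ) : Group (NonorientableSurfaceGroup k) :=
  inferInstanceAs (Group (PresentedGroup _))

/-- The standard epimorphism `ρ_k : F_k →* N_k`, the quotient map of the presentation. -/
def standardRho (k : ℕ) : FreeGroup (Fin k) →* NonorientableSurfaceGroup k :=
  PresentedGroup.mk _

/-- The Klein bottle group: the presented group on two generators `x_0, x_1` with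
single relator `x_0² x_1²`, i.e. the nonorientable genus-2 surface group. -/
def KleinBottleGroup : Type := NonorientableSurfaceGroup 2

instance : Group KleinBottleGroup :=
  inferInstanceAs (Group (NonorientableSurfaceGroup 2))

namespace KBP

/-! ### A concrete model of the Klein bottle group: `ℤ ⋊ ℤ` -/

def KB : Type := ℤ × ℤ

namespace KB

def mk (m k : ℤ) : KB := (m, k)

private def kmul (a b : ℤ × ℤ) : ℤ × ℤ := (a.1 + b.1, (b.1.negOnePow : ℤ) * a.2 + b.2)
private def kinv (a : ℤ × ℤ) : ℤ × ℤ := (-a.1, -((a.1.negOnePow : ℤ) * a.2))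

private lemma kmul_assoc (a b c : ℤ × ℤ) : kmul (kmul a b) c = kmul a (kmul b c) := by
  unfold kmul
  refine Prod.ext ?_ ?_ <;> simp [Int.negOnePow_add] <;> ring

private lemma kone_mul (a : ℤ × ℤ) : kmul (0, 0) a = a := by
  unfold kmul; refine Prod.ext ?_ ?_ <;> simp

private lemma kmul_one (a : ℤ × ℤ) : kmul a (0, 0) = a := by
  unfold kmul; refine Prod.ext ?_ ?_ <;> simp

private lemma kinv_mul (a : ℤ × ℤ) : kmul (kinv a) a = (0, 0) := by
  unfold kmul kinv
  refine Prod.ext ?_ ?_ <;> simp [Int.negOnePow_neg]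
  rcases Int.units_eq_one_or a.1.negOnePow with h | h <;> simp [h] <;> ring

instance : Group KB where
  mul := kmul
  one := ((0, 0) : ℤ × ℤ)
  inv := kinv
  mul_assoc := kmul_assoc
  one_mul := kone_mul
  mul_one := kmul_one
  inv_mul_cancel := kinv_mul

@[simp] lemma mul_def (m k m' k' : ℤ) :
    mk m k * mk m' k' = mk (m + m') ((m'.negOnePow : ℤ) * k + k') := rfl
@[simp] lemma one_def : (1 : KB) = mk 0 0 := rfl
@[simp] lemma inv_def (m k : ℤ) : (mk m k)⁻¹ = mk (-m) (-((m.negOnePow : ℤ) * k)) := rfl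

@[simp] lemma mk_fst (m k : ℤ) : (mk m k : ℤ × ℤ).1 = m := rfl
@[simp] lemma mk_snd (m k : ℤ) : (mk m k : ℤ × ℤ).2 = k := rfl

lemma fst_mul (a b : KB) : (a * b : ℤ × ℤ).1 = (a : ℤ × ℤ).1 + (b : ℤ × ℤ).1 := rfl
lemma fst_one : ((1 : KB) : ℤ × ℤ).1 = 0 := rfl
lemma fst_inv (a : KB) : ((a⁻¹ : KB) : ℤ × ℤ).1 = -(a : ℤ × ℤ).1 := rfl
lemma snd_mul (a b : KB) : (a * b : ℤ × ℤ).2 =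
    ((b : ℤ × ℤ).1.negOnePow : ℤ) * (a : ℤ × ℤ).2 + (b : ℤ × ℤ).2 := rfl
lemma snd_one : ((1 : KB) : ℤ × ℤ).2 = 0 := rfl
lemma snd_inv (a : KB) : ((a⁻¹ : KB) : ℤ × ℤ).2 =
    -(((a : ℤ × ℤ).1.negOnePow : ℤ) * (a : ℤ × ℤ).2) := rfl

lemma mk_inj {m k m' k' : ℤ} (h : mk m k = mk m' k') : m = m' ∧ k = k' :=
  ⟨congrArg Prod.fst h, congrArg Prod.snd h⟩

lemma eta (a : KB) : a = mk (a : ℤ × ℤ).1 (a : ℤ × ℤ).2 := rfl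

def T : KB := mk 1 0
def A : KB := mk 0 1

lemma fst_zpow (a : KB) (c : ℤ) : ((a ^ c : KB) : ℤ × ℤ).1 = c * (a : ℤ × ℤ).1 := by
  induction c using Int.induction_on with
  | zero => simp [fst_one]
  | succ k ih => rw [zpow_add_one, fst_mul, ih]; ring
  | pred k ih => rw [zpow_sub_one, fst_mul, ih, fst_inv]; ring

lemma zpow_mk_zero (y c : ℤ) : (mk 0 y) ^ c = mk 0 (c * y) := by
  induction c using Int.induction_on with
  | zero => simp
  | succ k ih => rw [zpow_add_one, ih]; simp; ring
  | pred k ih =>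
      rw [zpow_sub_one, ih]; simp [Int.negOnePow_neg]
      exact congrArg (mk 0) (by ring)

lemma zpow_T (m : ℤ) : T ^ m = mk m 0 := by
  induction m using Int.induction_on with
  | zero => simp
  | succ k ih => rw [zpow_add_one, ih]; simp [T]
  | pred k ih =>
      rw [zpow_sub_one, ih]; simp [T, Int.negOnePow_neg]
      exact congrArg (fun m => mk m 0) (by ring)

lemma zpow_A (k : ℤ) : A ^ k = mk 0 k := by
  rw [show A = mk 0 1 from rfl, zpow_mk_zero]; simp

lemma pair_eq (m k : ℤ) : mk m k = T ^ m * A ^ k := by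
  rw [zpow_T, zpow_A]; simp

end KB

open KB

abbrev K := KleinBottleGroup

/-! ### The isomorphism between `KleinBottleGroup` and `KB` -/

def genImg : Fin 2 → KB := fun i => if (i : ℕ) = 0 then T else T⁻¹ * A

lemma relator_eq : nonorientableRelator 2 =
    (FreeGroup.of (0 : Fin 2)) ^ 2 * ((FreeGroup.of (1 : Fin 2)) ^ 2 * 1) := rfl

lemma lift_relator : ∀ r ∈ ({nonorientableRelator 2} : Set (FreeGroup (Fin 2))),
    FreeGroup.lift genImg r = 1 := by
  intro r hr
  rw [Set.mem_singleton_iff] at hr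
  subst hr
  rw [relator_eq]
  simp only [map_mul, map_pow, map_one, FreeGroup.lift_apply_of, mul_one]
  norm_num [genImg, T, A, sq, Int.negOnePow_neg, Int.negOnePow_one, Int.negOnePow_zero]
  rw [one_def]

/-- The homomorphism from the presented Klein bottle group to the concrete model. -/
def fKB : K →* KB := PresentedGroup.toGroup lift_relator

def tK : K := PresentedGroup.of 0
def uK : K := PresentedGroup.of 1
def aK : K := tK * uK

lemma rel0 : (PresentedGroup.of (0 : Fin 2) : K) ^ 2 * (PresentedGroup.of (1 : Fin 2) : K) ^ 2 = 1 := by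
  have h : (PresentedGroup.mk _ (nonorientableRelator 2) : K) = 1 := by
    apply (QuotientGroup.eq_one_iff _).mpr
    exact Subgroup.subset_normalClosure (Set.mem_singleton _)
  rw [relator_eq] at h
  simp only [map_mul, map_pow, map_one, mul_one] at h
  exact h

lemma rel_conj : tK * aK * tK⁻¹ = aK⁻¹ := by
  have h := rel0
  set x : K := PresentedGroup.of (0 : Fin 2)
  set y : K := PresentedGroup.of (1 : Fin 2)
  have h' : (x * x) * (y * y) = 1 := by rw [← sq, ← sq]; exact h
  have hx : x * x = y⁻¹ * y⁻¹ := by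
    rw [eq_inv_of_mul_eq_one_left h', mul_inv_rev]
  show x * (x * y) * x⁻¹ = (x * y)⁻¹
  calc x * (x * y) * x⁻¹ = (x * x) * y * x⁻¹ := by group
    _ = (y⁻¹ * y⁻¹) * y * x⁻¹ := by rw [hx]
    _ = y⁻¹ * x⁻¹ := by group
    _ = (x * y)⁻¹ := (mul_inv_rev _ _).symm

lemma conj_t (k : ℤ) : tK * aK ^ k * tK⁻¹ = aK ^ (-k) := by
  calc tK * aK ^ k * tK⁻¹ = (tK * aK * tK⁻¹) ^ k := conj_zpow.symm
    _ = (aK⁻¹) ^ k := by rw [rel_conj]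
    _ = aK ^ (-k) := by rw [inv_zpow, zpow_neg]

lemma conj_t' (k : ℤ) : tK⁻¹ * aK ^ k * tK = aK ^ (-k) := by
  have h2 : tK⁻¹ * aK * tK = aK⁻¹ := by
    have e1 : tK⁻¹ * aK⁻¹ * tK = aK := by
      rw [← rel_conj]; group
    calc tK⁻¹ * aK * tK = (tK⁻¹ * aK⁻¹ * tK)⁻¹ := by group
      _ = aK⁻¹ := by rw [e1]
  calc tK⁻¹ * aK ^ k * tK = tK⁻¹ * aK ^ k * tK⁻¹⁻¹ := by rw [inv_inv]
    _ = (tK⁻¹ * aK * tK⁻¹⁻¹) ^ k := conj_zpow.symm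
    _ = (tK⁻¹ * aK * tK) ^ k := by rw [inv_inv]
    _ = (aK⁻¹) ^ k := by rw [h2]
    _ = aK ^ (-k) := by rw [inv_zpow, zpow_neg]

lemma base_comm (k : ℤ) : aK ^ k * tK = tK * aK ^ (-k) := by
  calc aK ^ k * tK = tK * (tK⁻¹ * aK ^ k * tK) := by group
    _ = tK * aK ^ (-k) := by rw [conj_t']

lemma base_comm' (k : ℤ) : aK ^ k * tK⁻¹ = tK⁻¹ * aK ^ (-k) := by
  calc aK ^ k * tK⁻¹ = tK⁻¹ * (tK * aK ^ k * tK⁻¹) := by group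
    _ = tK⁻¹ * aK ^ (-k) := by rw [conj_t]

lemma a_t_comm (m : ℤ) : ∀ k : ℤ, aK ^ k * tK ^ m = tK ^ m * aK ^ ((m.negOnePow : ℤ) * k) := by
  induction m using Int.induction_on with
  | zero => intro k; simp
  | succ j ih =>
      intro k
      have e : aK ^ k * tK ^ ((j : ℤ) + 1) = aK ^ k * tK ^ (j : ℤ) * tK := by
        rw [zpow_add_one, mul_assoc]
      rw [e, ih, mul_assoc, base_comm, ← mul_assoc, ← zpow_add_one]
      congr 1
      rw [Int.negOnePow_succ]
      push_cast
      ring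
  | pred j ih =>
      intro k
      have e : aK ^ k * tK ^ (-(j : ℤ) - 1) = aK ^ k * tK ^ (-j : ℤ) * tK⁻¹ := by
        rw [zpow_sub_one, mul_assoc]
      rw [e, ih, mul_assoc, base_comm', ← mul_assoc, ← zpow_sub_one]
      congr 1
      have he : ((-j : ℤ) - 1).negOnePow = -((-j : ℤ)).negOnePow := by
        rw [show ((-j : ℤ) - 1) = -((j : ℤ) + 1) by ring, Int.negOnePow_neg,
          Int.negOnePow_succ, Int.negOnePow_neg]
      rw [he]
      push_cast
      ring

/-- The homomorphism from the concrete model back to the presented group. -/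
def hK : KB →* K where
  toFun p := tK ^ (p : ℤ × ℤ).1 * aK ^ (p : ℤ × ℤ).2
  map_one' := by simp [fst_one]
  map_mul' a b := by
    show tK ^ ((a : ℤ × ℤ).1 + (b : ℤ × ℤ).1) *
        aK ^ (((b : ℤ × ℤ).1.negOnePow : ℤ) * (a : ℤ × ℤ).2 + (b : ℤ × ℤ).2) =
        (tK ^ (a : ℤ × ℤ).1 * aK ^ (a : ℤ × ℤ).2) * (tK ^ (b : ℤ × ℤ).1 * aK ^ (b : ℤ × ℤ).2)
    rw [zpow_add, zpow_add]
    simp only [mul_assoc]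
    congr 1
    rw [← mul_assoc, ← mul_assoc, ← a_t_comm]

lemma hK_mk (m k : ℤ) : hK (mk m k) = tK ^ m * aK ^ k := rfl

lemma Tinv_A : T⁻¹ * A = mk (-1) 1 := by
  show (mk 1 0)⁻¹ * mk 0 1 = _
  simp

lemma hK_fKB (z : K) : hK (fKB z) = z := by
  have key : hK.comp fKB = MonoidHom.id K := by
    apply PresentedGroup.ext
    intro i
    fin_cases i
    · show hK (fKB tK) = tK
      rw [show fKB tK = T from PresentedGroup.toGroup.of lift_relator]
      show hK (mk 1 0) = _
      rw [hK_mk, zpow_one, zpow_zero, mul_one]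
    · show hK (fKB uK) = uK
      rw [show fKB uK = T⁻¹ * A from PresentedGroup.toGroup.of lift_relator,
        Tinv_A, hK_mk, zpow_one]
      show tK ^ (-1 : ℤ) * (tK * uK) = uK
      rw [zpow_neg_one]
      group
  exact DFunLike.congr_fun key z

lemma fKB_injective : Function.Injective fKB := by
  intro x y h
  have := congrArg hK h
  rwa [hK_fKB, hK_fKB] at this

lemma fKB_aK : fKB aK = A := by
  show fKB (tK * uK) = A
  rw [map_mul, show fKB tK = T from PresentedGroup.toGroup.of lift_relator,
    show fKB uK = T⁻¹ * A from PresentedGroup.toGroup.of lift_relator]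
  group

lemma fKB_surjective : Function.Surjective fKB := by
  intro b
  refine ⟨hK b, ?_⟩
  rw [eta b, hK_mk, pair_eq, map_mul, map_zpow, map_zpow, fKB_aK,
    show fKB tK = T from PresentedGroup.toGroup.of lift_relator]


/-- The subgroup of `KB` of elements whose first coordinate is divisible by `q`. -/
def Hdvd (q : ℤ) : Subgroup KB where
  carrier := {a : KB | q ∣ (a : ℤ × ℤ).1}
  one_mem' := by show q ∣ _; rw [fst_one]; exact dvd_zero q
  mul_mem' := by
    intro a b ha hb
    show q ∣ _
    rw [fst_mul]
    exact dvd_add ha hb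
  inv_mem' := by
    intro a ha
    show q ∣ _
    rw [fst_inv]
    exact dvd_neg.mpr ha

/-- The subgroup generated by `mk 1 x` and `mk 0 d`. -/
def Hmod (x d : ℤ) : Subgroup KB where
  carrier := {a : KB |
    ∃ j : ℤ, (a : ℤ × ℤ).2 = (if Even (a : ℤ × ℤ).1 then 0 else x) + j * d}
  one_mem' := ⟨0, by rw [snd_one, fst_one]; simp⟩
  mul_mem' := by
    rintro a b ⟨j, hj⟩ ⟨j', hj'⟩
    by_cases hb : Even (b : ℤ × ℤ).1
    · have hε : (((b : ℤ × ℤ).1).negOnePow : ℤ) = 1 := by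
        rw [Int.negOnePow_even _ hb]; rfl
      have hpar : Even ((a : ℤ × ℤ).1 + (b : ℤ × ℤ).1) ↔ Even (a : ℤ × ℤ).1 := by
        simp [Int.even_add, hb]
      refine ⟨j + j', ?_⟩
      show (a * b : ℤ × ℤ).2 = (if Even ((a * b : ℤ × ℤ)).1 then 0 else x) + (j + j') * d
      rw [snd_mul, fst_mul, hε, hj, hj', one_mul]
      by_cases ha : Even (a : ℤ × ℤ).1
      · rw [if_pos ha, if_pos hb, if_pos (hpar.mpr ha)]; ring
      · rw [if_neg ha, if_pos hb, if_neg (fun hc => ha (hpar.mp hc))]; ring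
    · have hε : (((b : ℤ × ℤ).1).negOnePow : ℤ) = -1 := by
        rw [Int.negOnePow_odd _ (Int.not_even_iff_odd.mp hb)]; rfl
      have hpar : Even ((a : ℤ × ℤ).1 + (b : ℤ × ℤ).1) ↔ ¬ Even (a : ℤ × ℤ).1 := by
        simp [Int.even_add, hb]
      refine ⟨j' - j, ?_⟩
      show (a * b : ℤ × ℤ).2 = (if Even ((a * b : ℤ × ℤ)).1 then 0 else x) + (j' - j) * d
      rw [snd_mul, fst_mul, hε, hj, hj']
      by_cases ha : Even (a : ℤ × ℤ).1
      · rw [if_pos ha, if_neg hb, if_neg (fun hc => (hpar.mp hc) ha)]; ring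
      · rw [if_neg ha, if_neg hb, if_pos (hpar.mpr ha)]; ring
  inv_mem' := by
    rintro a ⟨j, hj⟩
    by_cases ha : Even (a : ℤ × ℤ).1
    · have hε : (((a : ℤ × ℤ).1).negOnePow : ℤ) = 1 := by
        rw [Int.negOnePow_even _ ha]; rfl
      refine ⟨-j, ?_⟩
      show ((a⁻¹ : KB) : ℤ × ℤ).2 = (if Even (((a⁻¹ : KB) : ℤ × ℤ)).1 then 0 else x) + (-j) * d
      rw [snd_inv, fst_inv, hε, hj, if_pos ha, if_pos ((even_neg).mpr ha)]
      ring
    · have hε : (((a : ℤ × ℤ).1).negOnePow : ℤ) = -1 := by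
        rw [Int.negOnePow_odd _ (Int.not_even_iff_odd.mp ha)]; rfl
      refine ⟨j, ?_⟩
      show ((a⁻¹ : KB) : ℤ × ℤ).2 = (if Even (((a⁻¹ : KB) : ℤ × ℤ)).1 then 0 else x) + j * d
      rw [snd_inv, fst_inv, hε, hj, if_neg ha, if_neg (fun hc => ha ((even_neg).mp hc))]
      ring

/-! ### Nielsen moves on the free group -/

section Moves

variable {n : ℕ}

abbrev F (n : ℕ) := FreeGroup (Fin n)

/-- Lift of a tuple. -/
def L (w : Fin n → KB) : F n →* KB := FreeGroup.lift w

/-- The standard generating tuple. -/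
def stdTup (n : ℕ) : Fin n → KB := fun i =>
  if (i : ℕ) = 0 then T else if (i : ℕ) = 1 then A else 1

/-- The automorphism of `F n` inverting the `i`-th generator. -/
def invMove (i : Fin n) : F n ≃* F n :=
  MonoidHom.toMulEquiv
    (FreeGroup.lift fun k => if k = i then (FreeGroup.of i)⁻¹ else FreeGroup.of k)
    (FreeGroup.lift fun k => if k = i then (FreeGroup.of i)⁻¹ else FreeGroup.of k)
    (by ext k; by_cases hk : k = i <;> simp [hk])
    (by ext k; by_cases hk : k = i <;> simp [hk])

/-- The automorphism of `F n` multiplying the `i`-th generator by the `c`-th power of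
the `j`-th one. -/
def mulMove (i j : Fin n) (hij : j ≠ i) (c : ℤ) : F n ≃* F n :=
  MonoidHom.toMulEquiv
    (FreeGroup.lift fun k => if k = i then FreeGroup.of i * FreeGroup.of j ^ c else FreeGroup.of k)
    (FreeGroup.lift fun k => if k = i then FreeGroup.of i * FreeGroup.of j ^ (-c) else FreeGroup.of k)
    (by
      ext k
      by_cases hk : k = i
      · subst hk
        simp [hij, mul_assoc, ← zpow_add]
      · simp [hk])
    (by
      ext k
      by_cases hk : k = i
      · subst hk
        simp [hij, mul_assoc, ← zpow_add]
      · simp [hk])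

/-- The automorphism of `F n` permuting the generators. -/
def permMove (e : Equiv.Perm (Fin n)) : F n ≃* F n := FreeGroup.freeGroupCongr e

lemma comp_invMove (w : Fin n → KB) (i : Fin n) :
    (L w).comp (invMove i).toMonoidHom = L (fun k => if k = i then (w i)⁻¹ else w k) := by
  ext k
  by_cases hk : k = i <;> simp [invMove, L, MonoidHom.toMulEquiv, hk]

lemma comp_mulMove (w : Fin n → KB) (i j : Fin n) (hij : j ≠ i) (c : ℤ) :
    (L w).comp (mulMove i j hij c).toMonoidHom =
      L (fun k => if k = i then w i * w j ^ c else w k) := by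
  ext k
  by_cases hk : k = i <;> simp [mulMove, L, MonoidHom.toMulEquiv, hk]

lemma comp_permMove (w : Fin n → KB) (e : Equiv.Perm (Fin n)) :
    (L w).comp (permMove e).toMonoidHom = L (fun k => w (e k)) := by
  ext k
  simp [permMove, L]

lemma chain {w w' : Fin n → KB} (β : F n ≃* F n)
    (h : (L w).comp β.toMonoidHom = L w')
    (h' : ∃ α : F n ≃* F n, (L w').comp α.toMonoidHom = L (stdTup n)) :
    ∃ α : F n ≃* F n, (L w).comp α.toMonoidHom = L (stdTup n) := by
  obtain ⟨α, hα⟩ := h'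
  refine ⟨α.trans β, ?_⟩
  rw [← hα, ← h]
  rfl

lemma surj_chain {w w' : Fin n → KB} (β : F n ≃* F n)
    (h : (L w).comp β.toMonoidHom = L w') (hs : Function.Surjective (L w)) :
    Function.Surjective (L w') := by
  rw [← h, MonoidHom.coe_comp]
  exact hs.comp β.surjective

lemma mem_of_surj (w : Fin n → KB) (H : Subgroup KB) (hw : ∀ i, w i ∈ H)
    (hs : Function.Surjective (L w)) (b : KB) : b ∈ H := by
  obtain ⟨z, rfl⟩ := hs b
  induction z using FreeGroup.induction_on with
  | C1 => rw [map_one]; exact H.one_mem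
  | of i => rw [show (L w) (FreeGroup.of i) = w i from FreeGroup.lift_apply_of]; exact hw i
  | inv_of i _ =>
      rw [map_inv]
      exact H.inv_mem (by rw [show (L w) (FreeGroup.of i) = w i from FreeGroup.lift_apply_of]; exact hw i)
  | mul x y hx hy => rw [map_mul]; exact H.mul_mem hx hy

end Moves

/-! ### Euclidean reduction of generating tuples -/

section Reduction

variable {n : ℕ}

lemma natAbs_emod_lt (a b : ℤ) (hb : b ≠ 0) : (a % b).natAbs < b.natAbs := by
  have h0 : a % b = a % |b| := (Int.emod_abs a b).symm
  have habs : 0 < |b| := abs_pos.mpr hb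
  have h1 : 0 ≤ a % |b| := Int.emod_nonneg a (ne_of_gt habs)
  have h2 : a % |b| < |b| := Int.emod_lt_of_pos a habs
  have h3 : |b| = (b.natAbs : ℤ) := Int.abs_eq_natAbs b
  omega

lemma sum_update_natAbs (y : Fin n → ℤ) (i : Fin n) (v : ℤ) :
    (∑ k, ((Function.update y i v) k).natAbs) =
      v.natAbs + ∑ k ∈ Finset.univ.erase i, (y k).natAbs := by
  have h : (fun k => ((Function.update y i v) k).natAbs) =
      Function.update (fun k => (y k).natAbs) i v.natAbs := by
    funext k
    by_cases hk : k = i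
    · subst hk; simp
    · simp [Function.update_of_ne hk]
  rw [h, Finset.sum_update_of_mem (Finset.mem_univ i), Finset.erase_eq]

/-- A tuple of the special shape `(t a^x, a^(y 1), …, a^(y (n-1)))`. -/
def wOf (n : ℕ) (x : ℤ) (y : Fin n → ℤ) : Fin n → KB := fun i =>
  if (i : ℕ) = 0 then mk 1 x else mk 0 (y i)

lemma phase2_finish (n : ℕ) (x : ℤ) (y : Fin n → ℤ) (i1 : Fin n) (hi1 : (i1 : ℕ) ≠ 0)
    (h1 : y i1 = 1) (hz : ∀ k : Fin n, (k : ℕ) ≠ 0 → k ≠ i1 → y k = 0) :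
    ∃ α : F n ≃* F n, (L (wOf n x y)).comp α.toMonoidHom = L (stdTup n) := by
  have hn2 : 2 ≤ n := by have := i1.isLt; omega
  set zero : Fin n := ⟨0, by omega⟩ with hzdef
  set one : Fin n := ⟨1, by omega⟩ with hodef
  have hone1 : ((one : Fin n) : ℕ) = 1 := rfl
  have hzero0 : ((zero : Fin n) : ℕ) = 0 := rfl
  have honz : one ≠ zero := fun h => by
    have := congrArg (fun z : Fin n => (z : ℕ)) h
    simp [hone1, hzero0] at this
  have hi1z : i1 ≠ zero := fun h => hi1 (by rw [h])
  set y2 : Fin n → ℤ := fun k => y (Equiv.swap i1 one k) with hy2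
  have hstep1 : (fun k => wOf n x y ((Equiv.swap i1 one) k)) = wOf n x y2 := by
    funext k
    by_cases hk : (k : ℕ) = 0
    · have hk0 : k = zero := Fin.ext (by rw [hk, hzero0])
      have hswap : Equiv.swap i1 one k = k := by
        apply Equiv.swap_apply_of_ne_of_ne
        · rw [hk0]; exact hi1z.symm
        · rw [hk0]; exact honz.symm
      rw [hswap]
      unfold wOf
      rw [if_pos hk, if_pos hk]
    · have hswapk : ((Equiv.swap i1 one k : Fin n) : ℕ) ≠ 0 := by
        by_cases hki : k = i1
        · rw [hki, Equiv.swap_apply_left, hone1]; exact one_ne_zero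
        · by_cases hko : k = one
          · rw [hko, Equiv.swap_apply_right]; exact hi1
          · rw [Equiv.swap_apply_of_ne_of_ne hki hko]; exact hk
      unfold wOf
      rw [if_neg hswapk, if_neg hk]
  apply chain (permMove (Equiv.swap i1 one)) ((comp_permMove _ _).trans (congrArg L hstep1))
  have hy2one : y2 one = 1 := by
    rw [hy2]
    show y (Equiv.swap i1 one one) = 1
    rw [Equiv.swap_apply_right]
    exact h1
  have hy2z : ∀ k : Fin n, (k : ℕ) ≠ 0 → k ≠ one → y2 k = 0 := by
    intro k hk hko
    show y (Equiv.swap i1 one k) = 0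
    by_cases hki : k = i1
    · rw [hki, Equiv.swap_apply_left]
      have hone_i1 : one ≠ i1 := fun h => hko (by rw [hki, ← h])
      exact hz one (by rw [hone1]; exact one_ne_zero) hone_i1
    · rw [Equiv.swap_apply_of_ne_of_ne hki hko]
      exact hz k hk hki
  have hstep2 : (fun k => if k = zero then wOf n x y2 zero * wOf n x y2 one ^ (-x)
      else wOf n x y2 k) = stdTup n := by
    funext k
    by_cases hk : k = zero
    · subst hk
      rw [if_pos rfl]
      have e0 : wOf n x y2 zero = mk 1 x := by unfold wOf; rw [if_pos hzero0]
      have e1 : wOf n x y2 one = mk 0 1 := by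
        unfold wOf
        rw [if_neg (by rw [hone1]; exact one_ne_zero), hy2one]
      rw [e0, e1, zpow_mk_zero, mul_def]
      unfold stdTup
      rw [if_pos hzero0]
      show mk (1 + 0) (((0:ℤ).negOnePow : ℤ) * x + (-x * 1)) = T
      unfold T
      rw [show ((1:ℤ) + 0) = 1 from rfl]
      refine congrArg (mk 1) ?_
      simp only [Int.negOnePow_zero, Units.val_one]
      ring
    · rw [if_neg hk]
      have hk0 : (k : ℕ) ≠ 0 := fun h => hk (Fin.ext (by rw [h, hzero0]))
      by_cases hk1 : k = one
      · subst hk1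
        unfold wOf stdTup
        rw [if_neg hk0, if_neg hk0, if_pos hone1, hy2one]
        rfl
      · have hk1' : (k : ℕ) ≠ 1 := fun h => hk1 (Fin.ext (by rw [h, hone1]))
        unfold wOf stdTup
        rw [if_neg hk0, if_neg hk0, if_neg hk1', hy2z k hk0 hk1]
        rfl
  apply chain (mulMove zero one honz (-x)) ((comp_mulMove _ _ _ honz _).trans (congrArg L hstep2))
  exact ⟨MulEquiv.refl _, MonoidHom.ext fun z => rfl⟩

lemma phase2 (n : ℕ) : ∀ (M : ℕ) (x : ℤ) (y : Fin n → ℤ), (∑ i, (y i).natAbs) = M →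
    Function.Surjective (L (wOf n x y)) →
    ∃ α : F n ≃* F n, (L (wOf n x y)).comp α.toMonoidHom = L (stdTup n) := by
  intro M
  induction M using Nat.strong_induction_on with
  | _ M IH =>
  intro x y hsum hsurj
  by_cases hex : ∃ i j : Fin n, (i : ℕ) ≠ 0 ∧ (j : ℕ) ≠ 0 ∧ i ≠ j ∧ y i ≠ 0 ∧ y j ≠ 0 ∧
      (y j).natAbs ≤ (y i).natAbs
  · obtain ⟨i, j, hi0, hj0, hij, hyi, hyj, hle⟩ := hex
    have hcomp := comp_mulMove (wOf n x y) i j (Ne.symm hij) (-(y i / y j))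
    have htup : (fun k => if k = i then wOf n x y i * wOf n x y j ^ (-(y i / y j))
        else wOf n x y k) = wOf n x (Function.update y i (y i % y j)) := by
      funext k
      by_cases hk : k = i
      · subst hk
        rw [if_pos rfl]
        unfold wOf
        rw [if_neg hi0, if_neg hj0, if_neg hi0, Function.update_self, zpow_mk_zero, mul_def]
        rw [show ((0:ℤ) + 0) = 0 from rfl]
        refine congrArg (mk 0) ?_
        simp only [Int.negOnePow_zero, Units.val_one, one_mul]
        rw [Int.emod_def]
        ring
      · rw [if_neg hk]
        unfold wOf
        by_cases hk0 : (k : ℕ) = 0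
        · rw [if_pos hk0, if_pos hk0]
        · rw [if_neg hk0, if_neg hk0, Function.update_of_ne hk]
    have hsurj' : Function.Surjective (L (wOf n x (Function.update y i (y i % y j)))) :=
      surj_chain _ (hcomp.trans (congrArg L htup)) hsurj
    have hmeas : (∑ k, ((Function.update y i (y i % y j)) k).natAbs) < M := by
      rw [sum_update_natAbs]
      have h2 : (∑ k, (y k).natAbs) =
          (y i).natAbs + ∑ k ∈ Finset.univ.erase i, (y k).natAbs :=
        (Finset.add_sum_erase _ _ (Finset.mem_univ i)).symm
      have h3 := natAbs_emod_lt (y i) (y j) hyj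
      omega
    exact chain _ (hcomp.trans (congrArg L htup)) (IH _ hmeas x _ rfl hsurj')
  · have hpair : ∀ i j : Fin n, (i : ℕ) ≠ 0 → (j : ℕ) ≠ 0 → i ≠ j → y i ≠ 0 → y j = 0 := by
      intro i j hi hj hij hyi
      by_contra hyj
      rcases le_total (y j).natAbs (y i).natAbs with h | h
      · exact hex ⟨i, j, hi, hj, hij, hyi, hyj, h⟩
      · exact hex ⟨j, i, hj, hi, Ne.symm hij, hyj, hyi, h⟩
    by_cases hone : ∃ i1 : Fin n, (i1 : ℕ) ≠ 0 ∧ y i1 ≠ 0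
    · obtain ⟨i1, hi1, hyi1⟩ := hone
      have hz : ∀ k : Fin n, (k : ℕ) ≠ 0 → k ≠ i1 → y k = 0 := fun k hk hki =>
        hpair i1 k hi1 hk (Ne.symm hki) hyi1
      have hmem : ∀ i, wOf n x y i ∈ Hmod x (y i1) := by
        intro i
        unfold wOf
        by_cases hi : (i : ℕ) = 0
        · rw [if_pos hi]
          refine ⟨0, ?_⟩
          rw [mk_snd, mk_fst, if_neg (by decide : ¬ Even (1:ℤ))]
          ring
        · by_cases hii : i = i1
          · subst hii
            rw [if_neg hi]
            refine ⟨1, ?_⟩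
            rw [mk_snd, mk_fst, if_pos Even.zero]
            ring
          · rw [if_neg hi]
            refine ⟨0, ?_⟩
            rw [mk_snd, mk_fst, if_pos Even.zero, hz i hi hii]
            ring
      have hA : A ∈ Hmod x (y i1) := mem_of_surj _ _ hmem hsurj A
      obtain ⟨j, hj⟩ := hA
      rw [show ((A : ℤ × ℤ)).2 = 1 from rfl, show ((A : ℤ × ℤ)).1 = 0 from rfl,
        if_pos Even.zero, zero_add] at hj
      have hdvd : y i1 ∣ 1 := ⟨j, by rw [hj]; ring⟩
      rcases Int.isUnit_iff.mp (isUnit_of_dvd_one hdvd) with h1 | h1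
      · exact phase2_finish n x y i1 hi1 h1 hz
      · have hstep : (fun k => if k = i1 then (wOf n x y i1)⁻¹ else wOf n x y k)
            = wOf n x (Function.update y i1 1) := by
          funext k
          by_cases hk : k = i1
          · subst hk
            rw [if_pos rfl]
            unfold wOf
            rw [if_neg hi1, if_neg hi1, Function.update_self, h1, inv_def]
            rw [show (-(0:ℤ)) = 0 from rfl]
            refine congrArg (mk 0) ?_
            simp only [Int.negOnePow_zero, Units.val_one]
            ring
          · rw [if_neg hk]
            unfold wOf
            by_cases hk0 : (k : ℕ) = 0
            · rw [if_pos hk0, if_pos hk0]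
            · rw [if_neg hk0, if_neg hk0, Function.update_of_ne hk]
        apply chain (invMove i1) ((comp_invMove _ _).trans (congrArg L hstep))
        exact phase2_finish n x _ i1 hi1 (by rw [Function.update_self])
          (fun k hk hki => by rw [Function.update_of_ne hki]; exact hz k hk hki)
    · push_neg at hone
      exfalso
      have hmem : ∀ i, wOf n x y i ∈ Hmod x 0 := by
        intro i
        unfold wOf
        by_cases hi : (i : ℕ) = 0
        · rw [if_pos hi]
          refine ⟨0, ?_⟩
          rw [mk_snd, mk_fst, if_neg (by decide : ¬ Even (1:ℤ))]
          ring
        · rw [if_neg hi]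
          refine ⟨0, ?_⟩
          rw [mk_snd, mk_fst, if_pos Even.zero, hone i hi]
          ring
      have hA : A ∈ Hmod x 0 := mem_of_surj _ _ hmem hsurj A
      obtain ⟨j, hj⟩ := hA
      rw [show ((A : ℤ × ℤ)).2 = 1 from rfl, show ((A : ℤ × ℤ)).1 = 0 from rfl,
        if_pos Even.zero, zero_add, mul_zero] at hj
      exact one_ne_zero hj

lemma phase1_finish (n : ℕ) (w : Fin n → KB) (i0 : Fin n)
    (h1 : ((w i0 : ℤ × ℤ)).1 = 1) (hz : ∀ k, k ≠ i0 → ((w k : ℤ × ℤ)).1 = 0)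
    (hsurj : Function.Surjective (L w)) :
    ∃ α : F n ≃* F n, (L w).comp α.toMonoidHom = L (stdTup n) := by
  have hn : 0 < n := i0.pos
  set zero : Fin n := ⟨0, hn⟩ with hzdef
  have hzero0 : ((zero : Fin n) : ℕ) = 0 := rfl
  set v : Fin n → KB := fun k => w (Equiv.swap i0 zero k) with hv
  have hcomp : (L w).comp (permMove (Equiv.swap i0 zero)).toMonoidHom = L v :=
    comp_permMove _ _
  apply chain _ hcomp
  have hsurjv : Function.Surjective (L v) := surj_chain _ hcomp hsurj
  have hv0 : ((v zero : ℤ × ℤ)).1 = 1 := by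
    show ((w (Equiv.swap i0 zero zero) : ℤ × ℤ)).1 = 1
    rw [Equiv.swap_apply_right]
    exact h1
  have hvk : ∀ k, k ≠ zero → ((v k : ℤ × ℤ)).1 = 0 := by
    intro k hk
    show ((w (Equiv.swap i0 zero k) : ℤ × ℤ)).1 = 0
    by_cases hki : k = i0
    · rw [hki, Equiv.swap_apply_left]
      exact hz zero (fun h => hk (by rw [hki, ← h]))
    · rw [Equiv.swap_apply_of_ne_of_ne hki hk]
      exact hz k hki
  set x : ℤ := ((v zero : ℤ × ℤ)).2 with hx
  set y : Fin n → ℤ := fun k => if (k : ℕ) = 0 then 0 else ((v k : ℤ × ℤ)).2 with hy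
  have hveq : v = wOf n x y := by
    funext k
    by_cases hk : (k : ℕ) = 0
    · have hk0 : k = zero := Fin.ext (by rw [hk, hzero0])
      rw [hk0]
      unfold wOf
      rw [if_pos hzero0]
      conv_lhs => rw [eta (v zero)]
      rw [hv0]
    · have hkz : k ≠ zero := fun h => hk (by rw [h, hzero0])
      unfold wOf
      rw [if_neg hk]
      have : y k = ((v k : ℤ × ℤ)).2 := by rw [hy]; simp only [if_neg hk]
      rw [this]
      conv_lhs => rw [eta (v k)]
      rw [hvk k hkz]
  rw [hveq] at hsurjv ⊢
  exact phase2 n _ x y rfl hsurjv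

lemma phase1 (n : ℕ) : ∀ (M : ℕ) (w : Fin n → KB),
    (∑ i, (((w i : ℤ × ℤ)).1).natAbs) = M → Function.Surjective (L w) →
    ∃ α : F n ≃* F n, (L w).comp α.toMonoidHom = L (stdTup n) := by
  intro M
  induction M using Nat.strong_induction_on with
  | _ M IH =>
  intro w hsum hsurj
  by_cases hex : ∃ i j : Fin n, i ≠ j ∧ ((w i : ℤ × ℤ)).1 ≠ 0 ∧ ((w j : ℤ × ℤ)).1 ≠ 0 ∧
      (((w j : ℤ × ℤ)).1).natAbs ≤ (((w i : ℤ × ℤ)).1).natAbs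
  · obtain ⟨i, j, hij, hpi, hpj, hle⟩ := hex
    set c : ℤ := -(((w i : ℤ × ℤ)).1 / ((w j : ℤ × ℤ)).1) with hc
    have hcomp := comp_mulMove w i j (Ne.symm hij) c
    set w' : Fin n → KB := fun k => if k = i then w i * w j ^ c else w k with hw'
    have hsurj' : Function.Surjective (L w') := surj_chain _ hcomp hsurj
    have hp'i : ((w' i : ℤ × ℤ)).1 = ((w i : ℤ × ℤ)).1 % ((w j : ℤ × ℤ)).1 := by
      show ((if i = i then w i * w j ^ c else w i : KB) : ℤ × ℤ).1 = _
      rw [if_pos rfl, fst_mul, fst_zpow, hc, Int.emod_def]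
      ring
    have hp'k : ∀ k, k ≠ i → w' k = w k := fun k hk => if_neg hk
    have hmeas : (∑ k, (((w' k : ℤ × ℤ)).1).natAbs) < M := by
      have h1 : (fun k => (((w' k : ℤ × ℤ)).1).natAbs) =
          Function.update (fun k => (((w k : ℤ × ℤ)).1).natAbs) i
            ((((w i : ℤ × ℤ)).1 % ((w j : ℤ × ℤ)).1).natAbs) := by
        funext k
        by_cases hk : k = i
        · subst hk; rw [Function.update_self, hp'i]
        · rw [Function.update_of_ne hk, hp'k k hk]
      rw [h1, Finset.sum_update_of_mem (Finset.mem_univ i), ← Finset.erase_eq]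
      have h2 : (∑ k, (((w k : ℤ × ℤ)).1).natAbs) =
          (((w i : ℤ × ℤ)).1).natAbs +
            ∑ k ∈ Finset.univ.erase i, (((w k : ℤ × ℤ)).1).natAbs :=
        (Finset.add_sum_erase _ _ (Finset.mem_univ i)).symm
      have h3 := natAbs_emod_lt ((w i : ℤ × ℤ)).1 ((w j : ℤ × ℤ)).1 hpj
      omega
    exact chain _ hcomp (IH _ hmeas w' rfl hsurj')
  · have hpair : ∀ i j : Fin n, i ≠ j → ((w i : ℤ × ℤ)).1 ≠ 0 → ((w j : ℤ × ℤ)).1 = 0 := by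
      intro i j hij hpi
      by_contra hpj
      rcases le_total (((w j : ℤ × ℤ)).1).natAbs (((w i : ℤ × ℤ)).1).natAbs with h | h
      · exact hex ⟨i, j, hij, hpi, hpj, h⟩
      · exact hex ⟨j, i, Ne.symm hij, hpj, hpi, h⟩
    have hone : ∃ i0 : Fin n, ((w i0 : ℤ × ℤ)).1 ≠ 0 := by
      by_contra hall
      push_neg at hall
      have hmem : ∀ i, w i ∈ Hdvd 0 := by
        intro i
        show (0 : ℤ) ∣ ((w i : ℤ × ℤ)).1
        rw [hall i]
      have hT : T ∈ Hdvd 0 := mem_of_surj _ _ hmem hsurj T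
      have h1 : (0 : ℤ) ∣ 1 := hT
      norm_num at h1
    obtain ⟨i0, hi0⟩ := hone
    have hz : ∀ k, k ≠ i0 → ((w k : ℤ × ℤ)).1 = 0 := fun k hk =>
      hpair i0 k (Ne.symm hk) hi0
    have hmem : ∀ i, w i ∈ Hdvd ((w i0 : ℤ × ℤ)).1 := by
      intro i
      by_cases hi : i = i0
      · rw [hi]; exact dvd_refl _
      · show ((w i0 : ℤ × ℤ)).1 ∣ ((w i : ℤ × ℤ)).1
        rw [hz i hi]
        exact dvd_zero _
    have hT : T ∈ Hdvd ((w i0 : ℤ × ℤ)).1 := mem_of_surj _ _ hmem hsurj T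
    have hdvd : ((w i0 : ℤ × ℤ)).1 ∣ 1 := hT
    rcases Int.isUnit_iff.mp (isUnit_of_dvd_one hdvd) with h1 | h1
    · exact phase1_finish n w i0 h1 hz hsurj
    · have hcomp := comp_invMove w i0
      set w' : Fin n → KB := fun k => if k = i0 then (w i0)⁻¹ else w k with hw'
      have hsurj' : Function.Surjective (L w') := surj_chain _ hcomp hsurj
      apply chain _ hcomp
      apply phase1_finish n w' i0
      · show ((if i0 = i0 then (w i0)⁻¹ else w i0 : KB) : ℤ × ℤ).1 = 1
        rw [if_pos rfl, fst_inv, h1]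
        ring
      · intro k hk
        show ((if k = i0 then (w i0)⁻¹ else w k : KB) : ℤ × ℤ).1 = 0
        rw [if_neg hk]
        exact hz k hk
      · exact hsurj'

/-- Every epimorphism onto the concrete model is Nielsen-equivalent to the standard one. -/
lemma main_lemma (n : ℕ) (φ : F n →* KB) (hφ : Function.Surjective φ) :
    ∃ α : F n ≃* F n, φ.comp α.toMonoidHom = L (stdTup n) := by
  have hw : φ = L (fun i => φ (FreeGroup.of i)) := by
    apply FreeGroup.ext_hom
    intro a
    rw [show (L (fun i => φ (FreeGroup.of i))) (FreeGroup.of a)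
      = φ (FreeGroup.of a) from FreeGroup.lift_apply_of]
  rw [hw] at hφ ⊢
  exact phase1 n _ _ rfl hφ

end Reduction

end KBP
theorem aut_transitive_on_epis_klein_bottle_group (n : ℕ)
    (φ ψ : FreeGroup (Fin n) →* KleinBottleGroup)
    (hφ : Function.Surjective φ) (hψ : Function.Surjective ψ) :
    ∃ α : FreeGroup (Fin n) ≃* FreeGroup (Fin n),
      ψ.comp α.toMonoidHom = φ := by
  have hφ' : Function.Surjective (KBP.fKB.comp φ) := by
    have h := KBP.fKB_surjective.comp hφ
    rwa [← MonoidHom.coe_comp] at h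
  have hψ' : Function.Surjective (KBP.fKB.comp ψ) := by
    have h := KBP.fKB_surjective.comp hψ
    rwa [← MonoidHom.coe_comp] at h
  obtain ⟨αφ, hαφ⟩ := KBP.main_lemma n (KBP.fKB.comp φ) hφ'
  obtain ⟨αψ, hαψ⟩ := KBP.main_lemma n (KBP.fKB.comp ψ) hψ'
  refine ⟨αφ.symm.trans αψ, ?_⟩
  apply MonoidHom.ext
  intro z
  apply KBP.fKB_injective
  have h1 := DFunLike.congr_fun hαψ (αφ.symm z)
  have h2 := DFunLike.congr_fun hαφ (αφ.symm z)
  simp only [MonoidHom.comp_apply, MulEquiv.coe_toMonoidHom] at h1 h2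
  rw [MulEquiv.apply_symm_apply] at h2
  show KBP.fKB (ψ ((αφ.symm.trans αψ) z)) = KBP.fKB (φ z)
  rw [MulEquiv.trans_apply]
  exact h1.trans h2.symm
end

section
/- Let g ≥ 1 and n < 2g. Then there is no surjective group homomorphism F_n →* Σ_g onto the orientable genus-g surface group; that is, the minimal number of generators of Σ_g is 2g. -/
open scoped commutatorElement

/-- The single relator `∏_{i=0}^{g-1} [x_{2i}, x_{2i+1}]` of the orientable genus-`g`
surface group, as an element of the free group on `Fin (2*g)`. -/
def orientableRelator (g : ℕ) : FreeGroup (Fin (2 * g)) :=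
  ((List.finRange g).map (fun i =>
    ⁅FreeGroup.of (⟨2 * i.val, by have := i.isLt; omega⟩ : Fin (2 * g)),
     FreeGroup.of (⟨2 * i.val + 1, by have := i.isLt; omega⟩ : Fin (2 * g))⁆)).prod

/-- The orientable genus-`g` surface group. -/
def SurfaceGroup (g : ℕ) : Type :=
  PresentedGroup ({orientableRelator g} : Set (FreeGroup (Fin (2 * g))))

instance (g : ℕ) : Group (SurfaceGroup g) :=
  inferInstanceAs (Group (PresentedGroup _))

/-- The standard epimorphism `π_g : F_{2g} →* Σ_g`, the quotient map of the presentation. -/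
def standardPi (g : ℕ) : FreeGroup (Fin (2 * g)) →* SurfaceGroup g :=
  PresentedGroup.mk _

theorem no_epi_to_surface_group_of_rank_lt (g n : ℕ) (hg : 1 ≤ g) (hn : n < 2 * g) :
    ¬ ∃ φ : FreeGroup (Fin n) →* SurfaceGroup g, Function.Surjective φ := by
  rintro ⟨φ, hφ⟩
  -- abelianization target
  set A := Multiplicative (Fin (2 * g) → ℤ) with hA
  let f : Fin (2 * g) → A := fun i => Multiplicative.ofAdd (Pi.single i 1)
  have hrel : ∀ r ∈ ({orientableRelator g} : Set (FreeGroup (Fin (2 * g)))),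
      FreeGroup.lift f r = 1 := by
    rintro r rfl
    unfold orientableRelator
    rw [map_list_prod]
    apply List.prod_eq_one
    intro x hx
    simp only [List.map_map, List.mem_map] at hx
    obtain ⟨i, -, rfl⟩ := hx
    simp only [Function.comp_apply, map_commutatorElement]
    exact commutatorElement_eq_one_iff_commute.mpr (Commute.all _ _)
  let ψ : SurfaceGroup g →* A := PresentedGroup.toGroup hrel
  -- ψ is surjective
  have hψ : Function.Surjective ψ := by
    intro a
    refine ⟨standardPi g (((List.finRange (2 * g)).map
      (fun i => (FreeGroup.of i) ^ (a.toAdd i))).prod), ?_⟩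
    have hcomm : ∀ w : FreeGroup (Fin (2 * g)), ψ (standardPi g w) = FreeGroup.lift f w :=
      fun w => rfl
    rw [hcomm, map_list_prod, List.map_map]
    have h1 : ∀ i : Fin (2 * g), (FreeGroup.lift f ∘ fun i => (FreeGroup.of i) ^ (a.toAdd i)) i
        = Multiplicative.ofAdd (Pi.single i (a.toAdd i) : Fin (2 * g) → ℤ) := by
      intro i
      simp only [Function.comp_apply, map_zpow, FreeGroup.lift_apply_of]
      show Multiplicative.ofAdd ((a.toAdd i) • (Pi.single i 1 : Fin (2 * g) → ℤ)) = _
      rw [← Pi.single_smul, smul_eq_mul, mul_one]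
    rw [List.map_congr_left (fun i _ => h1 i), ← Fin.prod_univ_def, ← ofAdd_sum,
      Finset.univ_sum_single, ofAdd_toAdd]
  let χ := ψ.comp φ
  have hχ : Function.Surjective χ := hψ.comp hφ
  let v : Fin n → (Fin (2 * g) → ℤ) := fun i => (χ (FreeGroup.of i)).toAdd
  have hmem : ∀ w : FreeGroup (Fin n), (χ w).toAdd ∈ Submodule.span ℤ (Set.range v) := by
    intro w
    induction w with
    | C1 => simp only [map_one]; exact Submodule.zero_mem _
    | of x => exact Submodule.subset_span ⟨x, rfl⟩
    | inv_of x _ =>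
      rw [map_inv]
      exact Submodule.neg_mem _ (Submodule.subset_span ⟨x, rfl⟩)
    | mul x y hx hy =>
      rw [map_mul]
      exact Submodule.add_mem _ hx hy
  have hspan : Submodule.span ℤ (Set.range v) = ⊤ := by
    rw [eq_top_iff]
    rintro a -
    obtain ⟨w, hw⟩ := hχ (Multiplicative.ofAdd a)
    have := hmem w
    rw [hw] at this
    simpa using this
  have := finrank_le_of_span_eq_top hspan
  rw [Module.finrank_fin_fun, Fintype.card_fin] at this
  omega
end

section
/- Let k ≥ 1 and n < k. Then there is no surjective group homomorphism F_n →* N_k onto the nonorientable genus-k surface group; that is, the minimal number of generators of N_k is k. -/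
/-- The mod-2 abelianization map on generators. -/
def mod2f (k : ℕ) : Fin k → Multiplicative (Fin k → ZMod 2) :=
  fun i => Multiplicative.ofAdd (Pi.single i 1)

lemma mod2_rel (k : ℕ) : ∀ r ∈ ({nonorientableRelator k} : Set (FreeGroup (Fin k))),
    FreeGroup.lift (mod2f k) r = 1 := by
  intro r hr
  rcases hr with rfl
  rw [nonorientableRelator, map_list_prod, List.map_map]
  apply List.prod_eq_one
  intro x hx
  simp only [List.mem_map] at hx
  rcases hx with ⟨i, -, rfl⟩
  show FreeGroup.lift (mod2f k) (FreeGroup.of i ^ 2) = 1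
  rw [map_pow, FreeGroup.lift_apply_of]
  show Multiplicative.ofAdd (Pi.single i 1) ^ 2 = 1
  rw [← ofAdd_nsmul]
  have : (2 : ℕ) • (Pi.single i 1 : Fin k → ZMod 2) = 0 := by
    ext j
    by_cases h : j = i <;> simp [h, Pi.single_apply] <;> decide
  rw [this]; rfl

/-- The induced map `N_k →* (ZMod 2)^k`. -/
def mod2pi (k : ℕ) : NonorientableSurfaceGroup k →* Multiplicative (Fin k → ZMod 2) :=
  PresentedGroup.toGroup (mod2_rel k)

theorem no_epi_to_nonorientable_surface_group_of_rank_lt (k n : ℕ)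
    (hk : 1 ≤ k) (hn : n < k) :
    ¬ ∃ φ : FreeGroup (Fin n) →* NonorientableSurfaceGroup k, Function.Surjective φ := by
  rintro ⟨φ, hφ⟩
  set ψ : FreeGroup (Fin n) →* Multiplicative (Fin k → ZMod 2) := (mod2pi k).comp φ with hψ
  set v : Fin n → (Fin k → ZMod 2) := fun i => Multiplicative.toAdd (ψ (FreeGroup.of i)) with hv
  -- every image of ψ lies in the span of v
  have key : ∀ w : FreeGroup (Fin n),
      Multiplicative.toAdd (ψ w) ∈ Submodule.span (ZMod 2) (Set.range v) := by
    intro w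
    induction w using FreeGroup.induction_on with
    | C1 => simp only [map_one]; exact Submodule.zero_mem _
    | of i => exact Submodule.subset_span ⟨i, rfl⟩
    | inv_of i h => rw [map_inv]; exact Submodule.neg_mem _ h
    | mul a b ha hb => rw [map_mul]; exact Submodule.add_mem _ ha hb
  -- the span contains all Pi.single i 1
  have hsingle : ∀ i : Fin k,
      (Pi.single i 1 : Fin k → ZMod 2) ∈ Submodule.span (ZMod 2) (Set.range v) := by
    intro i
    obtain ⟨w, hw⟩ := hφ (PresentedGroup.of (rels := {nonorientableRelator k}) i)
    have : Multiplicative.toAdd (ψ w) = Pi.single i 1 := by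
      rw [hψ, MonoidHom.comp_apply, hw]
      show Multiplicative.toAdd (PresentedGroup.toGroup (mod2_rel k) (PresentedGroup.of i))
        = Pi.single i 1
      rw [PresentedGroup.toGroup.of]
      rfl
    rw [← this]; exact key w
  have hspan : Submodule.span (ZMod 2) (Set.range v) = ⊤ := by
    rw [eq_top_iff]
    have := (Pi.basisFun (ZMod 2) (Fin k)).span_eq
    rw [← this, Submodule.span_le]
    rintro x ⟨i, rfl⟩
    rw [Pi.basisFun_apply]
    exact hsingle i
  have hle : Module.finrank (ZMod 2) (Fin k → ZMod 2) ≤ n := by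
    simpa using finrank_le_of_span_eq_top hspan
  rw [Module.finrank_fin_fun] at hle
  omega
end
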